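/- arXiv:1607.05116 — 6 statements merged into one kernel-verified Lean document; each statement's English description precedes it below -/
import Mathlib

section
/- Let p > 2 and β ∈ ℝ, and define F : ℝ → ℝ by F(t) = (p/2)·∫_β^t |s|^{(p-2)/2}·(s − β)₊ ds, where (a)₊ = max{a, 0}. Then there exists a constant C = C(p) > 1 such that for every t ∈ ℝ: (1/C)·(t − β)₊^{(p+2)/2} ≤ F(t) ≤ C·( |t|^{(p-2)/2} + (max{0, −β})^{(p-2)/2} )·(t − β)₊². -/
open MeasureTheory intervalIntegral

lemma cont_aux (α : ℝ) (hα : 0 < α) (β : ℝ) :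
    Continuous (fun s : ℝ => |s| ^ α * max (s - β) 0) := by
  apply Continuous.mul
  · exact continuous_abs.rpow_const (fun x => Or.inr hα.le)
  · exact (continuous_id.sub continuous_const).max continuous_const

lemma nonneg_aux (α β s : ℝ) : 0 ≤ |s| ^ α * max (s - β) 0 :=
  mul_nonneg (Real.rpow_nonneg (abs_nonneg s) α) (le_max_right _ _)

lemma key_lower (α : ℝ) (hα : 0 < α) (β t a b c : ℝ)
    (hβa : β ≤ a) (hab : a ≤ b) (hbt : b ≤ t)
    (hc : 0 < c) (hcb : c ≤ b - a)
    (hlow : ∀ s ∈ Set.Icc a b, c ≤ |s| ∧ c ≤ s - β) :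
    c ^ (α + 2) ≤ ∫ s in β..t, |s| ^ α * max (s - β) 0 := by
  have hint : ∀ u v : ℝ, IntervalIntegrable (fun s => |s| ^ α * max (s - β) 0) volume u v :=
    fun u v => (cont_aux α hα β).intervalIntegrable u v
  have h2 : ∫ _ in a..b, (c ^ (α + 1) : ℝ) ≤ ∫ s in a..b, |s| ^ α * max (s - β) 0 := by
    apply intervalIntegral.integral_mono_on hab intervalIntegrable_const (hint a b)
    intro s hs
    obtain ⟨hs1, hs2⟩ := hlow s hs
    have hmax : max (s - β) 0 = s - β := max_eq_left (le_trans hc.le hs2)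
    rw [hmax, Real.rpow_add hc, Real.rpow_one]
    exact mul_le_mul (Real.rpow_le_rpow hc.le hs1 hα.le) hs2 hc.le
      (Real.rpow_nonneg (abs_nonneg s) α)
  rw [intervalIntegral.integral_const, smul_eq_mul] at h2
  have h3 : c ^ (α + 2) ≤ (b - a) * c ^ (α + 1) := by
    have : c ^ (α + 2) = c ^ (α + 1) * c := by
      rw [show α + 2 = (α + 1) + 1 by ring, Real.rpow_add hc, Real.rpow_one]
    rw [this]
    calc c ^ (α + 1) * c ≤ c ^ (α + 1) * (b - a) :=
          mul_le_mul_of_nonneg_left hcb (Real.rpow_nonneg hc.le _)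
      _ = (b - a) * c ^ (α + 1) := by ring
  refine le_trans (le_trans h3 h2) ?_
  exact intervalIntegral.integral_mono_interval hβa hab hbt
    (Filter.Eventually.of_forall fun s => nonneg_aux α β s) (hint β t)

/-- two-sided bounds for `F(t) = (p/2)∫_β^t |s|^{(p-2)/2}(s−β)₊ ds`, `p > 2`. -/
theorem stmt_2 (p : ℝ) (hp : 2 < p) (β : ℝ)
    (F : ℝ → ℝ)
    (hF : ∀ t, F t = p / 2 * ∫ s in β..t, |s| ^ ((p - 2) / 2) * max (s - β) 0) :
    ∃ C > (1 : ℝ), ∀ t : ℝ,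
      (1 / C) * (max (t - β) 0) ^ ((p + 2) / 2) ≤ F t ∧
      F t ≤ C * (|t| ^ ((p - 2) / 2) + (max 0 (-β)) ^ ((p - 2) / 2)) * (max (t - β) 0) ^ 2 := by
  have hα : 0 < (p - 2) / 2 := by linarith
  set α := (p - 2) / 2 with hαdef
  set q := (p + 2) / 2 with hqdef
  have hq : 0 < q := by rw [hqdef]; linarith
  have h8q : (1 : ℝ) ≤ 8 ^ q := Real.one_le_rpow (by norm_num) hq.le
  have h8q0 : (0 : ℝ) < 8 ^ q := by positivity
  set C := (8 : ℝ) ^ q + p with hCdef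
  have hC1 : 1 < C := by rw [hCdef]; linarith
  have hC0 : 0 < C := by linarith
  refine ⟨C, hC1, fun t => ?_⟩
  have hint : ∀ u v : ℝ, IntervalIntegrable (fun s => |s| ^ α * max (s - β) 0) volume u v :=
    fun u v => (cont_aux α hα β).intervalIntegrable u v
  by_cases ht : t ≤ β
  · have hF0 : F t = 0 := by
      rw [hF]
      have h0 : ∫ s in β..t, |s| ^ α * max (s - β) 0 = ∫ _ in β..t, (0 : ℝ) := by
        apply intervalIntegral.integral_congr
        intro s hs
        have hsβ : s ≤ β := by
          rcases Set.mem_uIcc.mp hs with ⟨_, h⟩ | ⟨_, h⟩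
          · linarith
          · exact h
        have : max (s - β) 0 = 0 := max_eq_right (by linarith)
        simp [this]
      rw [h0]; simp
    have hmax : max (t - β) 0 = 0 := max_eq_right (by linarith)
    rw [hF0, hmax]
    constructor
    · rw [Real.zero_rpow (ne_of_gt hq), mul_zero]
    · have : (0 : ℝ) ^ 2 = 0 := by norm_num
      rw [this, mul_zero]
  · push_neg at ht
    have hL : 0 < t - β := by linarith
    have hmax : max (t - β) 0 = t - β := max_eq_left hL.le
    set L := t - β with hLdef
    constructor
    · -- lower bound
      have hcase : L / 2 ≤ t ∨ L / 2 ≤ -β := by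
        by_contra h
        push_neg at h
        obtain ⟨h1, h2⟩ := h
        have : t - β = L := rfl
        linarith
      have hc8 : 0 < L / 8 := by linarith
      have key : (L / 8) ^ (α + 2) ≤ ∫ s in β..t, |s| ^ α * max (s - β) 0 := by
        rcases hcase with h | h
        · apply key_lower α hα β t (t - L / 8) t (L / 8) (by linarith) (by linarith) le_rfl hc8
            (by linarith)
          intro s hs
          obtain ⟨hs1, hs2⟩ := hs
          constructor
          · calc L / 8 ≤ s := by linarith
              _ ≤ |s| := le_abs_self s
          · linarith
        · apply key_lower α hα β t (β + L / 8) (β + L / 4) (L / 8) (by linarith) (by linarith)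
            (by linarith) hc8 (by linarith)
          intro s hs
          obtain ⟨hs1, hs2⟩ := hs
          constructor
          · calc L / 8 ≤ -s := by linarith
              _ ≤ |s| := neg_le_abs s
          · linarith
      rw [hF, hmax]
      have hdiv : (L / 8) ^ (α + 2) = L ^ (α + 2) / 8 ^ (α + 2) :=
        Real.div_rpow hL.le (by norm_num : (0:ℝ) ≤ 8) (α + 2)
      have hexp : α + 2 = q := by rw [hαdef, hqdef]; ring
      rw [hexp] at key hdiv
      have hLq : 0 ≤ L ^ q := Real.rpow_nonneg hL.le q
      have hstep : 1 / C * L ^ q ≤ p / 2 * (L ^ q / 8 ^ q) := by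
        have h1 : 1 / C ≤ p / 2 / 8 ^ q := by
          rw [div_le_div_iff₀ hC0 h8q0]
          nlinarith
        calc 1 / C * L ^ q ≤ p / 2 / 8 ^ q * L ^ q := mul_le_mul_of_nonneg_right h1 hLq
          _ = p / 2 * (L ^ q / 8 ^ q) := by ring
      calc 1 / C * L ^ q ≤ p / 2 * (L ^ q / 8 ^ q) := hstep
        _ = p / 2 * (L / 8) ^ q := by rw [hdiv]
        _ ≤ p / 2 * ∫ s in β..t, |s| ^ α * max (s - β) 0 :=
            mul_le_mul_of_nonneg_left key (by linarith)
    · -- upper bound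
      set K := |t| ^ α + (max 0 (-β)) ^ α with hKdef
      have hK : 0 ≤ K := by positivity
      have hbound : ∀ s ∈ Set.Icc β t, |s| ^ α * max (s - β) 0 ≤ K * (s - β) := by
        intro s hs
        obtain ⟨hs1, hs2⟩ := hs
        have h1 : max (s - β) 0 = s - β := max_eq_left (by linarith)
        rw [h1]
        apply mul_le_mul_of_nonneg_right _ (by linarith)
        have habs : |s| ≤ max |t| (max 0 (-β)) := by
          rw [abs_le]
          constructor
          · have : -max 0 (-β) ≤ -(-β) := by
              simp only [neg_le, neg_neg]
              exact le_max_right 0 (-β)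
            have h2 : β ≤ s := hs1
            calc -max |t| (max 0 (-β)) ≤ -max 0 (-β) := by
                  simp only [neg_le_neg_iff]
                  exact le_max_right _ _
              _ ≤ β := by
                  have := le_max_right (0 : ℝ) (-β)
                  rcases le_total 0 (-β) with h | h
                  · rw [max_eq_right h]; linarith
                  · rw [max_eq_left h]; linarith
              _ ≤ s := hs1
          · calc s ≤ t := hs2
              _ ≤ |t| := le_abs_self t
              _ ≤ max |t| (max 0 (-β)) := le_max_left _ _
        calc |s| ^ α ≤ (max |t| (max 0 (-β))) ^ α :=
              Real.rpow_le_rpow (abs_nonneg s) habs hα.le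
          _ ≤ K := by
              rcases le_total |t| (max 0 (-β)) with h | h
              · rw [max_eq_right h, hKdef]
                have : 0 ≤ |t| ^ α := Real.rpow_nonneg (abs_nonneg t) α
                linarith
              · rw [max_eq_left h, hKdef]
                have : 0 ≤ (max 0 (-β)) ^ α := Real.rpow_nonneg (le_max_left 0 (-β)) α
                linarith
      have hmono : ∫ s in β..t, |s| ^ α * max (s - β) 0 ≤ ∫ s in β..t, K * (s - β) :=
        intervalIntegral.integral_mono_on ht.le (hint β t)
          (((continuous_const.mul (continuous_id.sub continuous_const))).intervalIntegrable β t)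
          hbound
      have hval : ∫ s in β..t, K * (s - β) = K * ((t - β) ^ 2 / 2) := by
        rw [intervalIntegral.integral_const_mul]
        congr 1
        have h := intervalIntegral.integral_comp_sub_right (a := β) (b := t) (fun x => x) β
        rw [h, integral_id]
        have : β - β = 0 := by ring
        rw [this]
        ring
      rw [hF, hmax]
      calc p / 2 * ∫ s in β..t, |s| ^ α * max (s - β) 0
          ≤ p / 2 * (K * ((t - β) ^ 2 / 2)) := by
            rw [← hval]
            exact mul_le_mul_of_nonneg_left hmono (by linarith)
        _ = p / 4 * K * (t - β) ^ 2 := by ring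
        _ ≤ C * K * (t - β) ^ 2 := by
            have hp4 : p / 4 ≤ C := by rw [hCdef]; linarith
            have hsq : 0 ≤ (t - β) ^ 2 := sq_nonneg _
            have : p / 4 * K ≤ C * K := mul_le_mul_of_nonneg_right hp4 hK
            exact mul_le_mul_of_nonneg_right this hsq
end

section
/- Let p > 2 and define F₋(X) = (p/(p+2))·(|X|^{(p+2)/2} − 1) + (|X|^{(p-2)/2}·X + 1) for X > −1. Then there exists a constant C = C(p) > 1 such that for every X > −1: (1/C)·(X + 1)^{(p+2)/2} ≤ F₋(X) ≤ C·( |X|^{(p-2)/2} + 1 )·(X + 1)². -/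
open Real Set

private lemma rpow_sub_one_mul {u t : ℝ} (hu : 1 < u) (ht : 0 ≤ t) :
    t ^ (u - 1) * t = t ^ u := by
  rcases ht.eq_or_lt with h | h
  · rw [← h, Real.zero_rpow (by linarith : u - 1 ≠ 0), Real.zero_rpow (by linarith : u ≠ 0)]
    ring
  · rw [show t ^ (u - 1) * t = t ^ (u - 1) * t ^ (1 : ℝ) by rw [Real.rpow_one],
      ← Real.rpow_add h]
    norm_num

private lemma hasDerivAt_hfun (u : ℝ) (hu : 1 < u) {t : ℝ} (ht : 0 < t) :
    HasDerivAt (fun s : ℝ => u * s ^ (u + 1) - (u + 1) * s ^ u + 1)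
      (u * (u + 1) * (t ^ (u - 1) * (t - 1))) t := by
  have A : HasDerivAt (fun s : ℝ => s ^ (u + 1)) ((u + 1) * t ^ u) t := by
    have := Real.hasDerivAt_rpow_const (x := t) (p := u + 1) (Or.inl ht.ne')
    simpa using this
  have B : HasDerivAt (fun s : ℝ => s ^ u) (u * t ^ (u - 1)) t :=
    Real.hasDerivAt_rpow_const (Or.inl ht.ne')
  have C := ((A.const_mul u).sub (B.const_mul (u + 1))).add_const 1
  refine C.congr_deriv ?_
  rw [show t ^ u = t ^ (u - 1) * t from (rpow_sub_one_mul hu ht.le).symm]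
  ring

private lemma hfun_cont (u : ℝ) (hu : 1 < u) :
    Continuous (fun s : ℝ => u * s ^ (u + 1) - (u + 1) * s ^ u + 1) := by
  have c1 : Continuous fun s : ℝ => s ^ (u + 1) :=
    continuous_id.rpow_const fun x => Or.inr (by linarith)
  have c2 : Continuous fun s : ℝ => s ^ u :=
    continuous_id.rpow_const fun x => Or.inr (by linarith)
  exact (((continuous_const.mul c1)).sub ((continuous_const.mul c2))).add continuous_const

private lemma hfun_upper (u : ℝ) (hu : 1 < u) {t : ℝ} (ht : t ∈ Set.Icc (0 : ℝ) 1) :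
    u * t ^ (u + 1) - (u + 1) * t ^ u + 1 ≤ u * (u + 1) / 2 * (1 - t) ^ 2 := by
  set g : ℝ → ℝ := fun s =>
    u * (u + 1) / 2 * (1 - s) ^ 2 - (u * s ^ (u + 1) - (u + 1) * s ^ u + 1) with hg
  have hder : ∀ x ∈ Set.Ioo (0 : ℝ) 1, HasDerivAt g
      (u * (u + 1) / 2 * (-(2 * (1 - x))) - u * (u + 1) * (x ^ (u - 1) * (x - 1))) x := by
    intro x hx
    have h1 : HasDerivAt (fun s : ℝ => 1 - s) (-1) x := (hasDerivAt_id x).const_sub 1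
    have h2 : HasDerivAt (fun s : ℝ => (1 - s) ^ 2) (-(2 * (1 - x))) x := by
      have := h1.pow 2
      refine this.congr_deriv ?_
      push_cast; ring
    exact (h2.const_mul (u * (u + 1) / 2)).sub (hasDerivAt_hfun u hu hx.1)
  have key : AntitoneOn g (Set.Icc 0 1) := by
    apply antitoneOn_of_deriv_nonpos (convex_Icc 0 1)
    · exact ((continuous_const.mul ((continuous_const.sub continuous_id).pow 2)).sub
        (hfun_cont u hu)).continuousOn
    · intro x hx
      rw [interior_Icc] at hx
      exact (hder x hx).differentiableAt.differentiableWithinAt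
    · intro x hx
      rw [interior_Icc] at hx
      rw [(hder x hx).deriv]
      have hxle : x ^ (u - 1) ≤ 1 := Real.rpow_le_one hx.1.le hx.2.le (by linarith)
      have huu : (0:ℝ) ≤ u * (u + 1) := by nlinarith
      have key := mul_nonneg (mul_nonneg huu (show (0:ℝ) ≤ 1 - x by linarith [hx.2]))
        (sub_nonneg.mpr hxle)
      nlinarith [key]
  have h1 := key ht (Set.right_mem_Icc.mpr zero_le_one) ht.2
  have hg1 : g 1 = 0 := by simp [hg, Real.one_rpow]
  rw [hg1] at h1
  simp only [hg] at h1
  linarith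

private lemma hfun_lower_mid (u : ℝ) (hu : 1 < u) {t : ℝ} (ht : t ∈ Set.Icc (1/2 : ℝ) 1) :
    u * (u + 1) / 2 ^ u * (1 - t) ^ 2 ≤ u * t ^ (u + 1) - (u + 1) * t ^ u + 1 := by
  have h2u : (0 : ℝ) < (2 : ℝ) ^ u := Real.rpow_pos_of_pos two_pos u
  have hB : (0 : ℝ) < (2 : ℝ) ^ (u - 1) := Real.rpow_pos_of_pos two_pos _
  have hBe : (2 : ℝ) ^ (u - 1) * 2 = 2 ^ u := by
    rw [← Real.rpow_add_one (by norm_num : (2 : ℝ) ≠ 0)]; ring_nf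
  set g : ℝ → ℝ := fun s =>
    (u * s ^ (u + 1) - (u + 1) * s ^ u + 1) - u * (u + 1) / 2 ^ u * (1 - s) ^ 2 with hg
  have hder : ∀ x ∈ Set.Ioo (1/2 : ℝ) 1, HasDerivAt g
      (u * (u + 1) * (x ^ (u - 1) * (x - 1)) - u * (u + 1) / 2 ^ u * (-(2 * (1 - x)))) x := by
    intro x hx
    have h1 : HasDerivAt (fun s : ℝ => 1 - s) (-1) x := (hasDerivAt_id x).const_sub 1
    have h2 : HasDerivAt (fun s : ℝ => (1 - s) ^ 2) (-(2 * (1 - x))) x := by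
      have := h1.pow 2
      refine this.congr_deriv ?_
      push_cast; ring
    exact (hasDerivAt_hfun u hu (by linarith [hx.1] : (0:ℝ) < x)).sub
      (h2.const_mul (u * (u + 1) / 2 ^ u))
  have key : AntitoneOn g (Set.Icc (1/2) 1) := by
    apply antitoneOn_of_deriv_nonpos (convex_Icc _ _)
    · exact ((hfun_cont u hu).sub
        (continuous_const.mul ((continuous_const.sub continuous_id).pow 2))).continuousOn
    · intro x hx
      rw [interior_Icc] at hx
      exact (hder x hx).differentiableAt.differentiableWithinAt
    · intro x hx
      rw [interior_Icc] at hx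
      rw [(hder x hx).deriv]
      have hx0 : (0:ℝ) < x := by linarith [hx.1]
      have hxA : (1/2 : ℝ) ^ (u - 1) ≤ x ^ (u - 1) :=
        Real.rpow_le_rpow (by norm_num) hx.1.le (by linarith)
      have hPB : 1 / (2:ℝ) ^ (u - 1) ≤ x ^ (u - 1) := by
        rwa [Real.div_rpow (by norm_num) (by norm_num), Real.one_rpow] at hxA
      have h1x : 0 ≤ 1 - x := by linarith [hx.2]
      rw [← hBe]
      have hE : u * (u + 1) * (x ^ (u - 1) * (x - 1))
            - u * (u + 1) / (2 ^ (u - 1) * 2) * -(2 * (1 - x))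
          = -(u * (u + 1) * (1 - x) * (x ^ (u - 1) - 1 / 2 ^ (u - 1))) := by
        field_simp
        ring
      rw [hE, neg_nonpos]
      have huu : (0:ℝ) ≤ u * (u + 1) := by nlinarith
      exact mul_nonneg (mul_nonneg huu h1x) (by linarith [hPB])
  have h1 := key ht (Set.right_mem_Icc.mpr (by norm_num)) ht.2
  have hg1 : g 1 = 0 := by simp [hg, Real.one_rpow]
  rw [hg1] at h1
  simp only [hg] at h1
  linarith

private lemma hfun_anti (u : ℝ) (hu : 1 < u) :
    AntitoneOn (fun s : ℝ => u * s ^ (u + 1) - (u + 1) * s ^ u + 1) (Set.Icc 0 1) := by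
  apply antitoneOn_of_deriv_nonpos (convex_Icc 0 1) (hfun_cont u hu).continuousOn
  · intro x hx
    rw [interior_Icc] at hx
    exact (hasDerivAt_hfun u hu hx.1).differentiableAt.differentiableWithinAt
  · intro x hx
    rw [interior_Icc] at hx
    rw [(hasDerivAt_hfun u hu hx.1).deriv]
    have huu : (0:ℝ) ≤ u * (u + 1) := by nlinarith
    have := mul_nonneg (mul_nonneg huu (Real.rpow_nonneg hx.1.le (u - 1)))
      (show (0:ℝ) ≤ 1 - x by linarith [hx.2])
    nlinarith [this]

private lemma hfun_lower (u : ℝ) (hu : 1 < u) {t : ℝ} (ht : t ∈ Set.Icc (0 : ℝ) 1) :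
    u * (u + 1) / 2 ^ u / 4 * (1 - t) ^ 2 ≤ u * t ^ (u + 1) - (u + 1) * t ^ u + 1 := by
  have h2u : (0 : ℝ) < (2 : ℝ) ^ u := Real.rpow_pos_of_pos two_pos u
  have hc : (0 : ℝ) < u * (u + 1) / 2 ^ u := by positivity
  rcases le_total (1/2 : ℝ) t with h | h
  · have := hfun_lower_mid u hu ⟨h, ht.2⟩
    nlinarith [sq_nonneg (1 - t)]
  · have h1 := hfun_anti u hu ht ⟨by norm_num, by norm_num⟩ h
    have h2 := hfun_lower_mid u hu (t := 1/2) ⟨le_refl _, by norm_num⟩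
    simp only at h1
    have h3 : (1 - t) ^ 2 ≤ 1 := by nlinarith [ht.1]
    nlinarith [h2, h1, h3]

set_option maxHeartbeats 1600000 in

/-- for `p > 2` there is `C = C(p) > 1` such that for all `X > −1`,
`(1/C)(X+1)^{(p+2)/2} ≤ F₋(X) ≤ C(|X|^{(p-2)/2} + 1)(X+1)²`, where
`F₋(X) = (p/(p+2))(|X|^{(p+2)/2} − 1) + (|X|^{(p-2)/2}X + 1)`. -/
theorem stmt_4 (p : ℝ) (hp : 2 < p) :
    ∃ C > (1 : ℝ), ∀ X : ℝ, -1 < X →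
      (1 / C) * (X + 1) ^ ((p + 2) / 2) ≤
        p / (p + 2) * (|X| ^ ((p + 2) / 2) - 1) + (|X| ^ ((p - 2) / 2) * X + 1) ∧
      p / (p + 2) * (|X| ^ ((p + 2) / 2) - 1) + (|X| ^ ((p - 2) / 2) * X + 1) ≤
        C * (|X| ^ ((p - 2) / 2) + 1) * (X + 1) ^ 2 := by
  have hp2 : (0 : ℝ) < p + 2 := by linarith
  obtain ⟨u, hudef⟩ : ∃ u : ℝ, u = p / 2 := ⟨_, rfl⟩
  have hu : 1 < u := by rw [hudef]; linarith
  have hup : (0 : ℝ) < u + 1 := by linarith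
  have e1 : (p + 2) / 2 = u + 1 := by rw [hudef]; ring
  have e2 : (p - 2) / 2 = u - 1 := by rw [hudef]; ring
  have e3 : p / (p + 2) = u / (u + 1) := by
    rw [hudef, div_eq_div_iff hp2.ne' (by linarith : (0:ℝ) < p / 2 + 1).ne']; ring
  have h2u : (0 : ℝ) < (2 : ℝ) ^ u := Real.rpow_pos_of_pos two_pos u
  have h2u1 : (1 : ℝ) ≤ (2 : ℝ) ^ u := Real.one_le_rpow one_le_two (by linarith)
  have e4 : (2 : ℝ) ^ (u + 2) = 2 ^ u * 4 := by
    rw [show u + 2 = u + 1 + 1 by ring, Real.rpow_add_one (two_ne_zero),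
      Real.rpow_add_one (two_ne_zero)]
    ring
  have e5 : (2 : ℝ) ^ (u + 1) = 2 ^ u * 2 := by
    rw [Real.rpow_add_one (two_ne_zero)]
  obtain ⟨C, hC⟩ : ∃ C : ℝ, C = 2 ^ u * 4 * (u + 1) := ⟨_, rfl⟩
  have hCpos : 0 < C := by rw [hC]; positivity
  have hC1 : 1 < C := by rw [hC]; nlinarith
  refine ⟨C, hC1, ?_⟩
  intro X hX
  rw [e1, e2, e3]
  rcases le_or_gt X 0 with hX0 | hX0
  · -- negative case: X ∈ (-1, 0]
    obtain ⟨t, rfl⟩ : ∃ t, X = -t := ⟨-X, by ring⟩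
    have ht0 : 0 ≤ t := by linarith
    have ht1 : t < 1 := by linarith
    have habs : |(-t)| = t := by rw [abs_neg, abs_of_nonneg ht0]
    rw [habs]
    have hsub : t ^ (u - 1) * (-t) = -(t ^ u) := by
      rw [mul_neg, rpow_sub_one_mul hu ht0]
    have hF : u / (u + 1) * (t ^ (u + 1) - 1) + (t ^ (u - 1) * (-t) + 1)
        = (u * t ^ (u + 1) - (u + 1) * t ^ u + 1) / (u + 1) := by
      rw [hsub]; field_simp; ring
    rw [hF]
    have ht : t ∈ Set.Icc (0 : ℝ) 1 := ⟨ht0, ht1.le⟩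
    have hupp := hfun_upper u hu ht
    have hlow := hfun_lower u hu ht
    have hb0 : (0 : ℝ) < -t + 1 := by linarith
    have hb1 : -t + 1 ≤ 1 := by linarith
    constructor
    · -- lower bound
      have hr : (-t + 1) ^ (u + 1) ≤ (-t + 1) ^ (2 : ℝ) :=
        Real.rpow_le_rpow_of_exponent_ge hb0 hb1 (by linarith)
      have hr2 : (-t + 1) ^ (2 : ℝ) = (-t + 1) ^ (2 : ℕ) := by
        rw [← Real.rpow_natCast]; norm_num
      rw [hr2] at hr
      have hs1 : (1 / C) * (-t + 1) ^ (u + 1) ≤ (1 / C) * (-t + 1) ^ (2 : ℕ) := by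
        apply mul_le_mul_of_nonneg_left hr (by positivity)
      refine hs1.trans ?_
      rw [div_mul_eq_mul_div, div_le_div_iff₀ hCpos hup]
      -- 1 * (-t+1)^2 * (u+1) ≤ (u*t^(u+1) - (u+1)*t^u + 1) * C
      have hsq : (0:ℝ) ≤ (1 - t) ^ 2 := sq_nonneg _
      have key : u * (u + 1) / 2 ^ u / 4 * (1 - t) ^ 2 * C = u * (u + 1) ^ 2 * (1 - t) ^ 2 := by
        rw [hC]; field_simp
      have hlowC : u * (u + 1) ^ 2 * (1 - t) ^ 2
          ≤ (u * t ^ (u + 1) - (u + 1) * t ^ u + 1) * C := by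
        rw [← key]
        exact mul_le_mul_of_nonneg_right hlow hCpos.le
      have hmono := mul_nonneg (show (0:ℝ) ≤ u * (u + 1) ^ 2 - (u + 1) by nlinarith) hsq
      nlinarith [hlowC, hmono]
    · -- upper bound
      have hA : (0:ℝ) ≤ t ^ (u - 1) := Real.rpow_nonneg ht0 _
      have h1 : (u * t ^ (u + 1) - (u + 1) * t ^ u + 1) / (u + 1) ≤ u / 2 * (1 - t) ^ 2 := by
        rw [div_le_iff₀ hup]
        nlinarith [hupp]
      refine h1.trans ?_
      have hsq : (0:ℝ) ≤ (1 - t) ^ 2 := sq_nonneg _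
      have hcoef : u / 2 ≤ C * (t ^ (u - 1) + 1) := by
        have hCbig : u / 2 ≤ C := by rw [hC]; nlinarith [h2u1, hu]
        have h2 : C ≤ C * (t ^ (u - 1) + 1) := by nlinarith [hA, hCpos]
        linarith
      calc u / 2 * (1 - t) ^ 2 ≤ C * (t ^ (u - 1) + 1) * (1 - t) ^ 2 :=
            mul_le_mul_of_nonneg_right hcoef hsq
        _ = C * (t ^ (u - 1) + 1) * (-t + 1) ^ 2 := by ring
  · -- positive case: 0 < X
    have habs : |X| = X := abs_of_pos hX0
    rw [habs]
    have hXn : (0:ℝ) ≤ X := hX0.le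
    have hA : (0:ℝ) ≤ X ^ (u - 1) := Real.rpow_nonneg hXn _
    have hXu : X ^ (u - 1) * X = X ^ u := rpow_sub_one_mul hu hXn
    have hXu1 : X ^ u * X = X ^ (u + 1) := by
      have := rpow_sub_one_mul (u := u + 1) (by linarith) hXn
      simpa using this
    have hXue : (0:ℝ) ≤ X ^ u := Real.rpow_nonneg hXn _
    have hXu1e : (0:ℝ) ≤ X ^ (u + 1) := Real.rpow_nonneg hXn _
    constructor
    · -- lower bound
      have hP : (X + 1) ^ (u + 1) ≤ 2 ^ (u + 1) * (X ^ (u + 1) + 1) := by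
        have h2u1' : (0:ℝ) < (2:ℝ) ^ (u + 1) := Real.rpow_pos_of_pos two_pos _
        rcases le_total X 1 with h | h
        · have : (X + 1) ^ (u + 1) ≤ (2:ℝ) ^ (u + 1) :=
            Real.rpow_le_rpow (by linarith) (by linarith) (by linarith)
          nlinarith [this, hXu1e]
        · have h1 : (X + 1) ^ (u + 1) ≤ (2 * X) ^ (u + 1) :=
            Real.rpow_le_rpow (by linarith) (by linarith) (by linarith)
          rw [Real.mul_rpow (by norm_num) hXn] at h1
          nlinarith [h1]
      have hF1 : X ^ (u + 1) + 1 ≤ (u + 1) * (u / (u + 1) * (X ^ (u + 1) - 1) + (X ^ (u - 1) * X + 1)) := by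
        rw [hXu]
        have : (u + 1) * (u / (u + 1) * (X ^ (u + 1) - 1) + (X ^ u + 1))
            = u * (X ^ (u + 1) - 1) + (u + 1) * (X ^ u + 1) := by
          field_simp
        rw [this]
        nlinarith [hXue, hXu1e, hu]
      have hFpos : 0 < u / (u + 1) * (X ^ (u + 1) - 1) + (X ^ (u - 1) * X + 1) := by
        nlinarith [hF1, hXu1e, hup]
      rw [div_mul_eq_mul_div, div_le_iff₀ hCpos]
      calc 1 * (X + 1) ^ (u + 1) ≤ 2 ^ u * 2 * (X ^ (u + 1) + 1) := by
            rw [← e5]; linarith [hP]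
        _ ≤ 2 ^ u * 2 * ((u + 1) * (u / (u + 1) * (X ^ (u + 1) - 1) + (X ^ (u - 1) * X + 1))) :=
            mul_le_mul_of_nonneg_left hF1 (by positivity)
        _ ≤ (u / (u + 1) * (X ^ (u + 1) - 1) + (X ^ (u - 1) * X + 1)) * C := by
            rw [hC]
            nlinarith [mul_nonneg (mul_nonneg h2u.le hup.le) hFpos.le]
    · -- upper bound
      have hF2 : u / (u + 1) * (X ^ (u + 1) - 1) + (X ^ (u - 1) * X + 1)
          ≤ X ^ (u + 1) + X ^ u + 1 := by
        rw [hXu]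
        have : u / (u + 1) * (X ^ (u + 1) - 1) ≤ X ^ (u + 1) := by
          rw [div_mul_eq_mul_div, div_le_iff₀ hup]
          nlinarith [hXu1e]
        linarith
      have halg : X ^ (u + 1) + X ^ u + 1 ≤ 2 * (X ^ (u - 1) + 1) * (X + 1) ^ 2 := by
        rw [← hXu1, ← hXu]
        nlinarith [mul_nonneg hA (sq_nonneg X), mul_nonneg hA hXn, sq_nonneg X, hXn]
      have hC2 : 2 ≤ C := by rw [hC]; nlinarith [h2u1, hu]
      have hfin : 2 * (X ^ (u - 1) + 1) * (X + 1) ^ 2 ≤ C * (X ^ (u - 1) + 1) * (X + 1) ^ 2 := by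
        apply mul_le_mul_of_nonneg_right _ (sq_nonneg _)
        apply mul_le_mul_of_nonneg_right hC2 (by linarith)
      linarith [hF2, halg, hfin]
end

section
/- Let 1 < q ≤ 2 and N ≥ 1. Then for every z₀, z₁ ∈ ℝ^N one has ‖ ‖z₀‖^{q-2}·z₀ − ‖z₁‖^{q-2}·z₁ ‖ ≤ 2^{2-q}·‖z₀ − z₁‖^{q-1}, where ‖z‖^{q-2}·z is interpreted as the zero vector when z = 0. -/
open Real

lemma aux_subadd {α : ℝ} (hα0 : 0 ≤ α) (hα1 : α ≤ 1) {x y : ℝ} (hx : 0 ≤ x) (hy : 0 ≤ y) :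
    (x + y) ^ α ≤ x ^ α + y ^ α := by
  have h := NNReal.rpow_add_le_add_rpow ⟨x, hx⟩ ⟨y, hy⟩ hα0 hα1
  exact_mod_cast h

lemma aux_concave2 {α : ℝ} (hα0 : 0 ≤ α) (hα1 : α ≤ 1) {x y : ℝ} (hx : 0 ≤ x) (hy : 0 ≤ y) :
    x ^ α + y ^ α ≤ 2 ^ (1 - α) * (x + y) ^ α := by
  have hc := (Real.concaveOn_rpow hα0 hα1).2 (Set.mem_Ici.2 hx) (Set.mem_Ici.2 hy)
    (by norm_num : (0:ℝ) ≤ 1/2) (by norm_num : (0:ℝ) ≤ 1/2) (by norm_num)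
  simp only [smul_eq_mul] at hc
  have h2 : (1/2 : ℝ) * x + 1/2 * y = (x + y) / 2 := by ring
  rw [h2] at hc
  have hd : ((x + y) / 2) ^ α = (x + y) ^ α / 2 ^ α :=
    Real.div_rpow (by linarith) (by norm_num) α
  rw [hd] at hc
  have h21 : (2:ℝ) ^ (1 - α) = 2 / 2 ^ α := by
    rw [Real.rpow_sub (by norm_num : (0:ℝ) < 2), Real.rpow_one]
  rw [h21, div_mul_eq_mul_div, mul_comm, ← div_mul_eq_mul_div]
  have : x ^ α + y ^ α ≤ 2 * ((x + y) ^ α / 2 ^ α) := by linarith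
  calc x ^ α + y ^ α ≤ 2 * ((x + y) ^ α / 2 ^ α) := this
    _ = (x + y) ^ α / 2 ^ α * 2 := by ring
  
lemma aux_sq_rpow {x α : ℝ} (hx : 0 ≤ x) : (x ^ 2) ^ α = (x ^ α) ^ 2 := by
  rw [← Real.rpow_natCast x 2, ← Real.rpow_natCast (x ^ α) 2, ← Real.rpow_mul hx,
    ← Real.rpow_mul hx, mul_comm]

lemma aux_sq_sub {α : ℝ} (hα0 : 0 < α) (hα1 : α ≤ 1) {r s : ℝ} (hr : 0 ≤ r) (hs : 0 ≤ s) :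
    (r ^ α - s ^ α) ^ 2 ≤ ((r - s) ^ 2) ^ α := by
  have key : ∀ u v : ℝ, 0 ≤ u → 0 ≤ v → v ≤ u → (u ^ α - v ^ α) ^ 2 ≤ ((u - v) ^ 2) ^ α := by
    intro u v hu hv huv
    have h1 : u ^ α - v ^ α ≤ (u - v) ^ α := by
      have := aux_subadd hα0.le hα1 (by linarith : (0:ℝ) ≤ u - v) hv
      rw [sub_add_cancel] at this
      linarith
    have h0 : 0 ≤ u ^ α - v ^ α := by
      have := Real.rpow_le_rpow hv huv hα0.le
      linarith
    have h2 : (u ^ α - v ^ α) ^ 2 ≤ ((u - v) ^ α) ^ 2 := by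
      have hnn : 0 ≤ (u - v) ^ α := Real.rpow_nonneg (by linarith) α
      nlinarith
    calc (u ^ α - v ^ α) ^ 2 ≤ ((u - v) ^ α) ^ 2 := h2
      _ = ((u - v) ^ 2) ^ α := (aux_sq_rpow (by linarith)).symm
  rcases le_total s r with h | h
  · exact key r s hr hs h
  · have := key s r hs hr h
    have e1 : (r ^ α - s ^ α) ^ 2 = (s ^ α - r ^ α) ^ 2 := by ring
    have e2 : ((r - s) ^ 2) ^ α = ((s - r) ^ 2) ^ α := by rw [show (r-s)^2 = (s-r)^2 by ring]
    rw [e1, e2]; exact this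

lemma aux_sq_add {α : ℝ} (hα0 : 0 ≤ α) (hα1 : α ≤ 1) {r s : ℝ} (hr : 0 ≤ r) (hs : 0 ≤ s) :
    (r ^ α + s ^ α) ^ 2 ≤ 4 ^ (1 - α) * ((r + s) ^ 2) ^ α := by
  have h1 : r ^ α + s ^ α ≤ 2 ^ (1 - α) * (r + s) ^ α := aux_concave2 hα0 hα1 hr hs
  have hnn1 : 0 ≤ r ^ α + s ^ α := by positivity
  have h2 : (r ^ α + s ^ α) ^ 2 ≤ (2 ^ (1 - α) * (r + s) ^ α) ^ 2 := by nlinarith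
  have h3 : (2 ^ (1 - α) * (r + s) ^ α) ^ 2 = 4 ^ (1 - α) * ((r + s) ^ 2) ^ α := by
    rw [mul_pow, ← aux_sq_rpow (by linarith : (0:ℝ) ≤ r + s),
      ← aux_sq_rpow (by norm_num : (0:ℝ) ≤ 2)]
    norm_num
  linarith [h2, h3.le]

set_option maxHeartbeats 1000000 in
/-- for `1 < q ≤ 2` and `z₀, z₁ ∈ ℝ^N`,
`‖ ‖z₀‖^{q-2}z₀ − ‖z₁‖^{q-2}z₁ ‖ ≤ 2^{2-q} ‖z₀ − z₁‖^{q-1}`. -/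
theorem stmt_5 (q : ℝ) (hq1 : 1 < q) (hq2 : q ≤ 2) (N : ℕ) (hN : 1 ≤ N) :
    ∀ z₀ z₁ : EuclideanSpace ℝ (Fin N),
      ‖‖z₀‖ ^ (q - 2) • z₀ - ‖z₁‖ ^ (q - 2) • z₁‖ ≤
        2 ^ (2 - q) * ‖z₀ - z₁‖ ^ (q - 1) := by
  intro a b
  set α : ℝ := q - 1 with hα
  set β : ℝ := q - 2 with hβ
  have hβα : α = β + 1 := by rw [hα, hβ]; ring
  have hα0 : 0 < α := by rw [hα]; linarith
  have hα1 : α ≤ 1 := by rw [hα]; linarith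
  have h1α : 1 - α = 2 - q := by rw [hα]; ring
  have hone : (1:ℝ) ≤ 2 ^ (2 - q) := Real.one_le_rpow (by norm_num) (by linarith)
  -- trivial cases
  rcases eq_or_ne a 0 with rfl | ha0
  · rcases eq_or_ne b 0 with rfl | hb0
    · simp
      positivity
    · have hb : (0:ℝ) < ‖b‖ := norm_pos_iff.2 hb0
      have hsmul : ‖b‖ ^ β * ‖b‖ = ‖b‖ ^ α := by rw [hβα, Real.rpow_add_one hb.ne' β]
      have hL : ‖(‖(0 : EuclideanSpace ℝ (Fin N))‖ ^ β) • (0 : EuclideanSpace ℝ (Fin N))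
          - ‖b‖ ^ β • b‖ = ‖b‖ ^ α := by
        rw [smul_zero, zero_sub, norm_neg, norm_smul, Real.norm_eq_abs,
          abs_of_nonneg (Real.rpow_nonneg (norm_nonneg b) β), hsmul]
      rw [hL, zero_sub, norm_neg]
      nlinarith [Real.rpow_nonneg (norm_nonneg b) α]
  rcases eq_or_ne b 0 with rfl | hb0
  · have ha : (0:ℝ) < ‖a‖ := norm_pos_iff.2 ha0
    have hsmul : ‖a‖ ^ β * ‖a‖ = ‖a‖ ^ α := by rw [hβα, Real.rpow_add_one ha.ne' β]
    have hL : ‖‖a‖ ^ β • a - (‖(0 : EuclideanSpace ℝ (Fin N))‖ ^ β)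
        • (0 : EuclideanSpace ℝ (Fin N))‖ = ‖a‖ ^ α := by
      rw [smul_zero, sub_zero, norm_smul, Real.norm_eq_abs,
        abs_of_nonneg (Real.rpow_nonneg (norm_nonneg a) β), hsmul]
    rw [hL, sub_zero]
    nlinarith [Real.rpow_nonneg (norm_nonneg a) α]
  -- main case
  have hr : (0:ℝ) < ‖a‖ := norm_pos_iff.2 ha0
  have hs : (0:ℝ) < ‖b‖ := norm_pos_iff.2 hb0
  set r : ℝ := ‖a‖ with hrdef
  set s : ℝ := ‖b‖ with hsdef
  set I : ℝ := (inner ℝ a b : ℝ) with hIdef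
  have hCS : |I| ≤ r * s := abs_real_inner_le_norm a b
  set d : ℝ := ‖a - b‖ with hddef
  have hd0 : 0 ≤ d := norm_nonneg _
  have hrα : r ^ α = r ^ β * r := by rw [hβα, Real.rpow_add_one hr.ne' β]
  have hsα : s ^ α = s ^ β * s := by rw [hβα, Real.rpow_add_one hs.ne' β]
  -- squared norms
  have hLsq : ‖r ^ β • a - s ^ β • b‖ ^ 2 =
      (r ^ α) ^ 2 - 2 * (r ^ β * s ^ β * I) + (s ^ α) ^ 2 := by
    rw [norm_sub_sq_real, norm_smul, norm_smul, real_inner_smul_left, real_inner_smul_right]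
    rw [Real.norm_eq_abs, Real.norm_eq_abs,
      abs_of_nonneg (Real.rpow_nonneg (norm_nonneg a) β),
      abs_of_nonneg (Real.rpow_nonneg (norm_nonneg b) β), hrα, hsα]
    ring
  have hdsq : d ^ 2 = r ^ 2 - 2 * I + s ^ 2 := by
    rw [hddef, norm_sub_sq_real]
  set μ : ℝ := (r * s + I) / (2 * (r * s)) with hμdef
  have hrs : (0:ℝ) < r * s := mul_pos hr hs
  have hμ0 : 0 ≤ μ := by
    apply div_nonneg _ (by linarith)
    have := (abs_le.1 hCS).1
    linarith
  have hμ1 : μ ≤ 1 := by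
    rw [hμdef, div_le_one (by linarith)]
    have := (abs_le.1 hCS).2
    linarith
  have hμsum : μ + (1 - μ) = 1 := by ring
  -- identity A
  have hidA : (r ^ α) ^ 2 - 2 * (r ^ β * s ^ β * I) + (s ^ α) ^ 2 =
      μ * (r ^ α - s ^ α) ^ 2 + (1 - μ) * (r ^ α + s ^ α) ^ 2 := by
    rw [hrα, hsα, hμdef]
    field_simp
    ring
  -- identity B
  have hidB : d ^ 2 = μ * (r - s) ^ 2 + (1 - μ) * (r + s) ^ 2 := by
    rw [hdsq, hμdef]
    field_simp
    ring
  -- concavity step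
  have hconc : μ * ((r - s) ^ 2) ^ α + (1 - μ) * ((r + s) ^ 2) ^ α ≤
      (μ * (r - s) ^ 2 + (1 - μ) * (r + s) ^ 2) ^ α := by
    have hc := (Real.concaveOn_rpow hα0.le hα1).2
      (Set.mem_Ici.2 (sq_nonneg (r - s))) (Set.mem_Ici.2 (sq_nonneg (r + s)))
      hμ0 (by linarith) hμsum
    simpa [smul_eq_mul] using hc
  -- endpoint bounds
  have hE1 : (r ^ α - s ^ α) ^ 2 ≤ 4 ^ (1 - α) * ((r - s) ^ 2) ^ α := by
    have h4 : (1:ℝ) ≤ 4 ^ (1 - α) := Real.one_le_rpow (by norm_num) (by linarith)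
    have := aux_sq_sub hα0 hα1 hr.le hs.le
    nlinarith [Real.rpow_nonneg (sq_nonneg (r - s) : (0:ℝ) ≤ (r-s)^2) α]
  have hE2 : (r ^ α + s ^ α) ^ 2 ≤ 4 ^ (1 - α) * ((r + s) ^ 2) ^ α :=
    aux_sq_add hα0.le hα1 hr.le hs.le
  -- combine
  have hmain : ‖r ^ β • a - s ^ β • b‖ ^ 2 ≤ 4 ^ (1 - α) * (d ^ 2) ^ α := by
    rw [hLsq, hidA, hidB]
    have h4nn : (0:ℝ) ≤ 4 ^ (1 - α) := Real.rpow_nonneg (by norm_num) _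
    calc μ * (r ^ α - s ^ α) ^ 2 + (1 - μ) * (r ^ α + s ^ α) ^ 2
        ≤ μ * (4 ^ (1-α) * ((r - s) ^ 2) ^ α) + (1 - μ) * (4 ^ (1-α) * ((r + s) ^ 2) ^ α) := by
          have g1 := mul_le_mul_of_nonneg_left hE1 hμ0
          have g2 := mul_le_mul_of_nonneg_left hE2 (by linarith : (0:ℝ) ≤ 1 - μ)
          linarith
      _ = 4 ^ (1-α) * (μ * ((r - s) ^ 2) ^ α + (1 - μ) * ((r + s) ^ 2) ^ α) := by ring
      _ ≤ 4 ^ (1-α) * (μ * (r - s) ^ 2 + (1 - μ) * (r + s) ^ 2) ^ α :=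
          mul_le_mul_of_nonneg_left hconc h4nn
  have hRsq : (2 ^ (2 - q) * d ^ (q - 1)) ^ 2 = 4 ^ (1 - α) * (d ^ 2) ^ α := by
    rw [← h1α, ← hα, mul_pow, ← aux_sq_rpow hd0, ← aux_sq_rpow (by norm_num : (0:ℝ) ≤ 2)]
    norm_num
  have hfin : ‖r ^ β • a - s ^ β • b‖ ^ 2 ≤ (2 ^ (2 - q) * d ^ (q - 1)) ^ 2 := by
    rw [hRsq]; exact hmain
  have hLnn : 0 ≤ ‖r ^ β • a - s ^ β • b‖ := norm_nonneg _
  have hRnn : 0 ≤ 2 ^ (2 - q) * d ^ (q - 1) := by positivity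
  have := Real.sqrt_le_sqrt hfin
  rwa [Real.sqrt_sq hLnn, Real.sqrt_sq hRnn] at this
end

section
/- Let 1 < p ≤ 2. Then for every ε ≥ 0 and every t, s ∈ ℝ one has |(ε + t²)^{(p-2)/4}·t − (ε + s²)^{(p-2)/4}·s| ≤ 2^{(2-p)/2}·|t − s|^{p/2}, where when ε = 0 the expression (t²)^{(p-2)/4}·t is interpreted as 0 at t = 0. -/
open Real Set Filter

private lemma psi_hasDeriv (p ε : ℝ) (hε : 0 < ε) (u : ℝ) :
    HasDerivAt (fun u : ℝ => (ε + u ^ 2) ^ ((p - 2) / 4) * u)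
      ((ε + u ^ 2) ^ ((p - 2) / 4 - 1) * (ε + p / 2 * u ^ 2)) u := by
  have h1 : 0 < ε + u ^ 2 := by positivity
  have hinner : HasDerivAt (fun u : ℝ => ε + u ^ 2) (2 * u) u := by
    simpa using (hasDerivAt_pow 2 u).const_add ε
  have hr : HasDerivAt (fun u : ℝ => (ε + u ^ 2) ^ ((p - 2) / 4))
      (2 * u * ((p - 2) / 4) * (ε + u ^ 2) ^ ((p - 2) / 4 - 1)) u :=
    hinner.rpow_const (Or.inl h1.ne')
  have H := hr.mul (hasDerivAt_id u)
  simp only [id_eq, mul_one] at H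
  have hsplit : (ε + u ^ 2) ^ ((p - 2) / 4)
      = (ε + u ^ 2) ^ ((p - 2) / 4 - 1) * (ε + u ^ 2) := by
    rw [← Real.rpow_add_one h1.ne']
    ring_nf
  refine H.congr_deriv ?_
  rw [hsplit]; ring

private lemma f_anti (p ε : ℝ) (hp1 : 1 < p) (hp2 : p ≤ 2) (hε : 0 < ε) :
    AntitoneOn (fun x : ℝ => (ε + x) ^ ((p - 2) / 4 - 1) * (ε + p / 2 * x)) (Set.Ici 0) := by
  have hder : ∀ x : ℝ, 0 ≤ x →
      HasDerivAt (fun x : ℝ => (ε + x) ^ ((p - 2) / 4 - 1) * (ε + p / 2 * x))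
        ((ε + x) ^ ((p - 2) / 4 - 2) * ((3 * p - 6) / 4 * ε + (p - 2) / 4 * (p / 2) * x)) x := by
    intro x hx
    have h1 : 0 < ε + x := by positivity
    have hinner : HasDerivAt (fun x : ℝ => ε + x) 1 x := by
      simpa using (hasDerivAt_id x).const_add ε
    have hr : HasDerivAt (fun x : ℝ => (ε + x) ^ ((p - 2) / 4 - 1))
        (1 * ((p - 2) / 4 - 1) * (ε + x) ^ ((p - 2) / 4 - 1 - 1)) x :=
      hinner.rpow_const (Or.inl h1.ne')
    have hlin : HasDerivAt (fun x : ℝ => ε + p / 2 * x) (p / 2) x := by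
      simpa using ((hasDerivAt_id x).const_mul (p / 2)).const_add ε
    have H := hr.mul hlin
    have hsplit : (ε + x) ^ ((p - 2) / 4 - 1)
        = (ε + x) ^ ((p - 2) / 4 - 2) * (ε + x) := by
      rw [← Real.rpow_add_one h1.ne']
      ring_nf
    refine H.congr_deriv ?_
    have : ((p - 2) / 4 - 1 - 1) = ((p - 2) / 4 - 2) := by ring
    rw [this, hsplit]; ring
  apply antitoneOn_of_deriv_nonpos (convex_Ici 0)
  · intro x hx
    exact (hder x hx).continuousAt.continuousWithinAt
  · intro x hx
    rw [interior_Ici] at hx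
    exact (hder x (le_of_lt hx)).differentiableAt.differentiableWithinAt
  · intro x hx
    rw [interior_Ici] at hx
    rw [(hder x (le_of_lt hx)).deriv]
    have h1 : 0 < ε + x := add_pos hε hx
    have hb : (0:ℝ) < (ε + x) ^ ((p - 2) / 4 - 2) := Real.rpow_pos_of_pos h1 _
    have hbr : (3 * p - 6) / 4 * ε + (p - 2) / 4 * (p / 2) * x ≤ 0 := by
      have hx' : (0:ℝ) ≤ x := le_of_lt hx
      have ha : (3 * p - 6) / 4 * ε ≤ 0 :=
        mul_nonpos_of_nonpos_of_nonneg (by linarith) hε.le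
      have hb2 : (p - 2) / 4 * (p / 2) * x ≤ 0 := by
        apply mul_nonpos_of_nonpos_of_nonneg _ hx'
        have : (0:ℝ) < p / 2 := by linarith
        nlinarith
      linarith
    exact mul_nonpos_of_nonneg_of_nonpos hb.le hbr

private lemma psi_mono (p ε : ℝ) (hp1 : 1 < p) (hε : 0 < ε) :
    Monotone (fun u : ℝ => (ε + u ^ 2) ^ ((p - 2) / 4) * u) := by
  apply monotone_of_deriv_nonneg
  · intro u; exact (psi_hasDeriv p ε hε u).differentiableAt
  · intro u
    rw [(psi_hasDeriv p ε hε u).deriv]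
    have h1 : 0 < ε + u ^ 2 := by positivity
    have hb : (0:ℝ) ≤ (ε + u ^ 2) ^ ((p - 2) / 4 - 1) := (Real.rpow_pos_of_pos h1 _).le
    have : (0:ℝ) ≤ ε + p / 2 * u ^ 2 := by nlinarith [sq_nonneg u]
    positivity

/-- centered bound: for `m, h ≥ 0`, `ψ(m+h) - ψ(m-h) ≤ 2 ψ(h)`. -/
private lemma center (p ε : ℝ) (hp1 : 1 < p) (hp2 : p ≤ 2) (hε : 0 < ε)
    (h : ℝ) (hh : 0 ≤ h) (m : ℝ) (hm : 0 ≤ m) :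
    (ε + (m + h) ^ 2) ^ ((p - 2) / 4) * (m + h)
      - (ε + (m - h) ^ 2) ^ ((p - 2) / 4) * (m - h)
      ≤ 2 * ((ε + h ^ 2) ^ ((p - 2) / 4) * h) := by
  set F : ℝ → ℝ := fun x =>
    (ε + (x - h) ^ 2) ^ ((p - 2) / 4) * (x - h)
      - (ε + (x + h) ^ 2) ^ ((p - 2) / 4) * (x + h) with hF_def
  have hF : ∀ x : ℝ, HasDerivAt F
      ((ε + (x - h) ^ 2) ^ ((p - 2) / 4 - 1) * (ε + p / 2 * (x - h) ^ 2)
        - (ε + (x + h) ^ 2) ^ ((p - 2) / 4 - 1) * (ε + p / 2 * (x + h) ^ 2)) x := by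
    intro x
    have h1 := (psi_hasDeriv p ε hε (x - h)).comp x ((hasDerivAt_id x).sub_const h)
    have h2 := (psi_hasDeriv p ε hε (x + h)).comp x ((hasDerivAt_id x).add_const h)
    have H12 := h1.sub h2
    simp at H12
    exact H12
  have hmono : MonotoneOn F (Set.Ici 0) := by
    apply monotoneOn_of_deriv_nonneg (convex_Ici 0)
    · exact fun x _ => (hF x).continuousAt.continuousWithinAt
    · exact fun x _ => (hF x).differentiableAt.differentiableWithinAt
    · intro x hx
      rw [interior_Ici] at hx
      rw [(hF x).deriv]
      have hsq : (x - h) ^ 2 ≤ (x + h) ^ 2 := by nlinarith [(mem_Ioi.1 hx).le, hh]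
      have := f_anti p ε hp1 hp2 hε (mem_Ici.2 (sq_nonneg (x - h)))
        (mem_Ici.2 (sq_nonneg (x + h))) hsq
      simpa [sub_nonneg] using this
  have h0m := hmono (mem_Ici.2 le_rfl) (mem_Ici.2 hm) hm
  have e0 : F 0 = -2 * ((ε + h ^ 2) ^ ((p - 2) / 4) * h) := by
    simp only [hF_def]
    rw [zero_sub, zero_add, neg_sq]
    ring
  rw [e0] at h0m
  simp only [hF_def] at h0m
  linarith

/-- key bound in centered form. -/
private lemma key0 (p ε : ℝ) (hp1 : 1 < p) (hp2 : p ≤ 2) (hε : 0 < ε)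
    (h : ℝ) (hh : 0 ≤ h) (m : ℝ) :
    (ε + (m + h) ^ 2) ^ ((p - 2) / 4) * (m + h)
      - (ε + (m - h) ^ 2) ^ ((p - 2) / 4) * (m - h)
      ≤ 2 ^ ((2 - p) / 2) * (2 * h) ^ (p / 2) := by
  have hstep : (ε + (m + h) ^ 2) ^ ((p - 2) / 4) * (m + h)
      - (ε + (m - h) ^ 2) ^ ((p - 2) / 4) * (m - h)
      ≤ 2 * ((ε + h ^ 2) ^ ((p - 2) / 4) * h) := by
    rcases le_or_gt 0 m with hm | hm
    · exact center p ε hp1 hp2 hε h hh m hm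
    · have hc := center p ε hp1 hp2 hε h hh (-m) (by linarith)
      have e1 : (-m + h) = -(m - h) := by ring
      have e2 : (-m - h) = -(m + h) := by ring
      rw [e1, e2, neg_sq, neg_sq] at hc
      nlinarith [hc]
  refine hstep.trans ?_
  rcases hh.eq_or_lt with rfl | hh'
  · have hp0 : p / 2 ≠ 0 := by positivity
    have : ((0:ℝ)) ^ (p / 2) = 0 := Real.zero_rpow hp0
    simp [this]
  · -- 2 * ψ(h) ≤ 2 * h^{p/2}  and  RHS = 2 * h^{p/2}
    have hψ : (ε + h ^ 2) ^ ((p - 2) / 4) * h ≤ h ^ (p / 2) := by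
      have hb : (ε + h ^ 2) ^ ((p - 2) / 4) ≤ (h ^ 2) ^ ((p - 2) / 4) :=
        Real.rpow_le_rpow_of_nonpos (by positivity) (by linarith) (by linarith)
      have he : ((h:ℝ) ^ 2) ^ ((p - 2) / 4) * h = h ^ (p / 2) := by
        rw [← Real.rpow_natCast h 2, ← Real.rpow_mul hh'.le,
          ← Real.rpow_add_one (ne_of_gt hh')]
        congr 1
        ring
      calc (ε + h ^ 2) ^ ((p - 2) / 4) * h ≤ (h ^ 2) ^ ((p - 2) / 4) * h :=
            mul_le_mul_of_nonneg_right hb hh'.le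
        _ = h ^ (p / 2) := he
    have hrhs : 2 ^ ((2 - p) / 2) * (2 * h) ^ (p / 2) = 2 * h ^ (p / 2) := by
      rw [Real.mul_rpow (by norm_num) hh'.le, ← mul_assoc,
        ← Real.rpow_add (by norm_num : (0:ℝ) < 2)]
      have : (2 - p) / 2 + p / 2 = 1 := by ring
      rw [this, Real.rpow_one]
    rw [hrhs]
    linarith
  
/-- positive-ε version, with absolute value. -/
private lemma key_abs (p ε : ℝ) (hp1 : 1 < p) (hp2 : p ≤ 2) (hε : 0 < ε) (t s : ℝ) :
    |(ε + t ^ 2) ^ ((p - 2) / 4) * t - (ε + s ^ 2) ^ ((p - 2) / 4) * s| ≤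
      2 ^ ((2 - p) / 2) * |t - s| ^ (p / 2) := by
  have main : ∀ t s : ℝ, s ≤ t →
      (ε + t ^ 2) ^ ((p - 2) / 4) * t - (ε + s ^ 2) ^ ((p - 2) / 4) * s ≤
        2 ^ ((2 - p) / 2) * (t - s) ^ (p / 2) := by
    intro t s hst
    have := key0 p ε hp1 hp2 hε ((t - s) / 2) (by linarith) ((t + s) / 2)
    have e1 : (t + s) / 2 + (t - s) / 2 = t := by ring
    have e2 : (t + s) / 2 - (t - s) / 2 = s := by ring
    have e3 : 2 * ((t - s) / 2) = t - s := by ring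
    rwa [e1, e2, e3] at this
  rcases le_total s t with hst | hst
  · have hmono := psi_mono p ε hp1 hε hst
    rw [abs_of_nonneg (by simpa using sub_nonneg.2 hmono), abs_of_nonneg (by linarith)]
    exact main t s hst
  · have hmono := psi_mono p ε hp1 hε hst
    rw [abs_sub_comm, abs_sub_comm t s,
      abs_of_nonneg (by simpa using sub_nonneg.2 hmono), abs_of_nonneg (by linarith)]
    exact main s t hst

/-- for `1 < p ≤ 2`, `ε ≥ 0` and `t, s ∈ ℝ`,
`|(ε+t²)^{(p-2)/4} t − (ε+s²)^{(p-2)/4} s| ≤ 2^{(2-p)/2} |t−s|^{p/2}`. -/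
theorem stmt_6 (p : ℝ) (hp1 : 1 < p) (hp2 : p ≤ 2) :
    ∀ ε : ℝ, 0 ≤ ε → ∀ t s : ℝ,
      |(ε + t ^ 2) ^ ((p - 2) / 4) * t - (ε + s ^ 2) ^ ((p - 2) / 4) * s| ≤
        2 ^ ((2 - p) / 2) * |t - s| ^ (p / 2) := by
  intro ε hε t s
  rcases hε.lt_or_eq with hε' | rfl
  · exact key_abs p ε hp1 hp2 hε' t s
  · have piece : ∀ u : ℝ, Filter.Tendsto (fun e : ℝ => (e + u ^ 2) ^ ((p - 2) / 4) * u)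
        (nhdsWithin 0 (Set.Ioi 0)) (nhds ((0 + u ^ 2) ^ ((p - 2) / 4) * u)) := by
      intro u
      rcases eq_or_ne u 0 with rfl | hu
      · simp only [ne_eq, OfNat.ofNat_ne_zero, not_false_eq_true, zero_pow, add_zero,
          mul_zero]
        exact tendsto_const_nhds
      · have h2 : (0:ℝ) < 0 + u ^ 2 := by positivity
        have hc : ContinuousAt (fun e : ℝ => (e + u ^ 2) ^ ((p - 2) / 4) * u) 0 := by
          have hadd : ContinuousAt (fun e : ℝ => e + u ^ 2) 0 := by fun_prop
          exact (hadd.rpow_const (Or.inl h2.ne')).mul continuousAt_const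
        exact hc.tendsto.mono_left nhdsWithin_le_nhds
    have tend := ((piece t).sub (piece s)).abs
    refine le_of_tendsto tend ?_
    filter_upwards [self_mem_nhdsWithin] with e he
    exact key_abs p e hp1 hp2 he t s
end

section
/- Let {Yₙ}_{n≥1} be a sequence of nonnegative real numbers and let c > 0, b > 1, β > 0 be such that Y_{n+1} ≤ c·bⁿ·Yₙ^{1+β} for every n ≥ 1, and Y₁ ≤ c^{-1/β}·b^{-(β+1)/β²}. Then Yₙ → 0 as n → ∞. -/
/-- fast geometric convergence lemma: if `Y_{n+1} ≤ c bⁿ Yₙ^{1+β}` for `n ≥ 1`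
and `Y₁ ≤ c^{-1/β} b^{-(β+1)/β²}`, then `Yₙ → 0`. -/
theorem stmt_7 (Y : ℕ → ℝ) (c b β : ℝ) (hc : 0 < c) (hb : 1 < b) (hβ : 0 < β)
    (hY : ∀ n : ℕ, 1 ≤ n → 0 ≤ Y n)
    (hrec : ∀ n : ℕ, 1 ≤ n → Y (n + 1) ≤ c * b ^ n * Y n ^ (1 + β))
    (hY1 : Y 1 ≤ c ^ (-1 / β) * b ^ (-(β + 1) / β ^ 2)) :
    Filter.Tendsto Y Filter.atTop (nhds 0) := by
  have hb0 : (0:ℝ) < b := lt_trans one_pos hb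
  set K : ℝ := c ^ (-1/β) * b ^ (-1/β^2) with hK
  have hK0 : 0 < K := mul_pos (Real.rpow_pos_of_pos hc _) (Real.rpow_pos_of_pos hb0 _)
  have key : ∀ n : ℕ, 1 ≤ n → Y n ≤ K * b ^ (-(n:ℝ)/β) := by
    intro n hn
    induction n with
    | zero => omega
    | succ m ih =>
      rcases Nat.lt_or_ge m 1 with h1 | hm
      · have hm : m = 0 := by omega
        subst hm
        refine hY1.trans_eq ?_
        rw [hK, mul_assoc, ← Real.rpow_add hb0]
        congr 1
        push_cast
        congr 1
        field_simp
        ring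
      · have ihm := ih hm
        calc Y (m+1) ≤ c * b ^ m * Y m ^ (1+β) := hrec m hm
          _ ≤ c * b ^ m * (K * b ^ (-(m:ℝ)/β)) ^ (1+β) := by
              apply mul_le_mul_of_nonneg_left
              · exact Real.rpow_le_rpow (hY m hm) ihm (by positivity)
              · positivity
          _ = K * b ^ (-((m+1:ℕ):ℝ)/β) := by
              rw [hK, Real.mul_rpow (by positivity) (by positivity),
                  Real.mul_rpow (by positivity) (by positivity),
                  ← Real.rpow_natCast b m,
                  ← Real.rpow_mul hc.le, ← Real.rpow_mul hb0.le,
                  ← Real.rpow_mul hb0.le]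
              have : c * b ^ (m:ℝ) * (c ^ (-1/β * (1+β)) * b ^ (-1/β^2 * (1+β)) *
                  b ^ (-(m:ℝ)/β * (1+β))) =
                  c ^ ((1:ℝ) + -1/β * (1+β)) *
                  b ^ ((m:ℝ) + (-1/β^2 * (1+β) + -(m:ℝ)/β * (1+β))) := by
                rw [Real.rpow_add hc, Real.rpow_add hb0, Real.rpow_add hb0,
                    Real.rpow_one]
                ring
              rw [this]
              push_cast
              rw [mul_assoc, ← Real.rpow_add hb0]
              congr 1
              · congr 1
                field_simp
                ring
              · congr 1
                field_simp
                ring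
  have hr0 : (0:ℝ) ≤ b ^ (-1/β) := (Real.rpow_pos_of_pos hb0 _).le
  have hr1 : b ^ (-1/β) < 1 :=
    Real.rpow_lt_one_of_one_lt_of_neg hb (div_neg_of_neg_of_pos (by norm_num) hβ)
  have hgeo : Filter.Tendsto (fun n : ℕ => K * (b ^ (-1/β)) ^ n) Filter.atTop (nhds 0) := by
    have := (tendsto_pow_atTop_nhds_zero_of_lt_one hr0 hr1).const_mul K
    simpa using this
  apply squeeze_zero' (g := fun n : ℕ => K * (b ^ (-1/β)) ^ n)
  · filter_upwards [Filter.eventually_ge_atTop 1] with n hn using hY n hn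
  · filter_upwards [Filter.eventually_ge_atTop 1] with n hn
    refine (key n hn).trans_eq ?_
    congr 1
    rw [← Real.rpow_natCast (b ^ (-1/β)) n, ← Real.rpow_mul hb0.le]
    congr 1
    ring
  · exact hgeo
end

section
/- There exists a universal constant C > 0 such that for every continuously differentiable function f : ℝ² → ℝ with compact support, ∫_{ℝ²} |f|² dx ≤ C·|{x ∈ ℝ² : f(x) ≠ 0}|·∫_{ℝ²} ‖∇f‖² dx, where |·| denotes the two-dimensional Lebesgue measure of the set. -/
open MeasureTheory
open scoped NNReal ENNReal

local notation "E" => EuclideanSpace ℝ (Fin 2)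

private lemma nn_sq_eq (a : ℝ) : (‖|a| ^ 2‖₊ : ℝ≥0∞) = (‖a‖₊ : ℝ≥0∞) ^ (2:ℕ) := by
  rw [nnnorm_pow, Real.nnnorm_abs]; push_cast; ring

private lemma rpow_two_eq (a : ℝ≥0∞) : a ^ (2:ℝ) = a ^ (2:ℕ) := by
  rw [show ((2:ℝ)) = ((2:ℕ):ℝ) by norm_num, ENNReal.rpow_natCast]

private lemma key_lintegral (f : E → ℝ) (hf : ContDiff ℝ 1 f) (hsupp : HasCompactSupport f) :
    ∫⁻ x, (‖f x‖₊ : ℝ≥0∞) ^ (2 : ℕ) ≤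
      4 * MeasureTheory.lintegralPowLePowLIntegralFDerivConst (volume : Measure E) 2 *
        volume {x | f x ≠ 0} * ∫⁻ x, (‖fderiv ℝ f x‖₊ : ℝ≥0∞) ^ (2 : ℕ) := by
  classical
  set K : ℝ≥0 := MeasureTheory.lintegralPowLePowLIntegralFDerivConst (volume : Measure E) 2
  set I : ℝ≥0∞ := ∫⁻ x, (‖f x‖₊ : ℝ≥0∞) ^ (2 : ℕ) with hI
  set J : ℝ≥0∞ := ∫⁻ x, (‖fderiv ℝ f x‖₊ : ℝ≥0∞) ^ (2 : ℕ) with hJ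
  set A : Set E := {x | f x ≠ 0} with hA
  have hfm : Measurable f := hf.continuous.measurable
  have hAm : MeasurableSet A := (hfm (measurableSet_singleton 0)).compl
  have hfm' : AEMeasurable (fun x => (‖f x‖₊ : ℝ≥0∞)) volume :=
    hfm.nnnorm.coe_nnreal_ennreal.aemeasurable
  have hDfm : AEMeasurable (fun x => (‖fderiv ℝ f x‖₊ : ℝ≥0∞)) volume :=
    ((hf.continuous_fderiv one_ne_zero).measurable.nnnorm.coe_nnreal_ennreal).aemeasurable
  have h22 : (2 : ℝ).HolderConjugate 2 := ⟨by norm_num, by norm_num, by norm_num⟩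
  -- finiteness of I
  have hIfin : I ≠ ∞ := by
    have hcs : HasCompactSupport (fun x => |f x| ^ 2) := by
      have := hsupp.comp_left (g := fun y : ℝ => |y| ^ 2) (by simp)
      simpa [Function.comp_def] using this
    have hint : Integrable (fun x => |f x| ^ 2) :=
      (hf.continuous.abs.pow 2).integrable_of_hasCompactSupport hcs
    have hlt : ∫⁻ x, (‖|f x| ^ 2‖₊ : ℝ≥0∞) < ∞ := hint.2
    refine ne_of_lt (lt_of_le_of_lt (le_of_eq (lintegral_congr fun x => ?_)) hlt)
    exact (nn_sq_eq (f x)).symm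
  -- Step 1: Hölder with indicator
  have step1 : I ≤ (volume A) ^ ((1:ℝ)/2) * (∫⁻ x, (‖f x‖₊ : ℝ≥0∞) ^ (4 : ℕ)) ^ ((1:ℝ)/2) := by
    have H := ENNReal.lintegral_mul_le_Lp_mul_Lq (volume : Measure E) h22
      (f := A.indicator (fun _ => 1)) (g := fun x => (‖f x‖₊ : ℝ≥0∞) ^ (2 : ℕ))
      ((measurable_one.indicator hAm).aemeasurable) (hfm'.pow_const 2)
    simp only [Pi.mul_apply] at H
    have e1 : ∫⁻ x, A.indicator (fun _ => (1:ℝ≥0∞)) x * (‖f x‖₊ : ℝ≥0∞) ^ (2 : ℕ) = I := by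
      apply lintegral_congr
      intro x
      by_cases hx : f x = 0
      · simp [hx]
      · simp [Set.indicator_of_mem, hA, hx]
    have e2 : ∫⁻ x, A.indicator (fun _ => (1:ℝ≥0∞)) x ^ (2:ℝ) = volume A := by
      rw [show (fun x => A.indicator (fun _ => (1:ℝ≥0∞)) x ^ (2:ℝ)) =
          A.indicator (fun _ => 1) from ?_]
      · rw [lintegral_indicator hAm]; simp
      · funext x
        by_cases hx : x ∈ A <;> simp [hx]
    have e3 : ∫⁻ x, ((‖f x‖₊ : ℝ≥0∞) ^ (2 : ℕ)) ^ (2:ℝ) = ∫⁻ x, (‖f x‖₊ : ℝ≥0∞) ^ (4 : ℕ) := by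
      apply lintegral_congr
      intro x
      rw [rpow_two_eq]
      ring
    rw [e1, e2, e3] at H
    exact H
  -- Step 2: GNS applied to f * f
  have hconj : Real.HolderConjugate (Module.finrank ℝ E) 2 := by
    rw [finrank_euclideanSpace_fin]
    exact ⟨by norm_num, by norm_num, by norm_num⟩
  have hu : ContDiff ℝ 1 (fun x => f x * f x) := hf.mul hf
  have h2u : HasCompactSupport (fun x => f x * f x) := by
    have := hsupp.mul_right (f' := f)
    simpa [Pi.mul_def] using this
  have GNS := MeasureTheory.lintegral_pow_le_pow_lintegral_fderiv (volume : Measure E)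
    hu h2u hconj
  -- bound the derivative of f*f pointwise
  have hpt : ∀ x, (‖fderiv ℝ (fun y => f y * f y) x‖₊ : ℝ≥0∞) ≤
      2 * ((‖f x‖₊ : ℝ≥0∞) * (‖fderiv ℝ f x‖₊ : ℝ≥0∞)) := by
    intro x
    have hdx : DifferentiableAt ℝ f x := hf.differentiable one_ne_zero x
    have hfd : fderiv ℝ (fun y => f y * f y) x = f x • fderiv ℝ f x + f x • fderiv ℝ f x := by
      exact fderiv_mul hdx hdx
    rw [hfd]
    calc (‖f x • fderiv ℝ f x + f x • fderiv ℝ f x‖₊ : ℝ≥0∞)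
        ≤ (‖f x • fderiv ℝ f x‖₊ : ℝ≥0∞) + ‖f x • fderiv ℝ f x‖₊ := by
          norm_cast; exact nnnorm_add_le _ _
      _ = 2 * ((‖f x‖₊ : ℝ≥0∞) * ‖fderiv ℝ f x‖₊) := by
          have hs : ‖f x • fderiv ℝ f x‖₊ = ‖f x‖₊ * ‖fderiv ℝ f x‖₊ := by
            rw [nnnorm_smul]
          rw [two_mul, hs]; push_cast; ring
  have hDer : ∫⁻ x, (‖fderiv ℝ (fun y => f y * f y) x‖₊ : ℝ≥0∞) ≤
      2 * ∫⁻ x, (‖f x‖₊ : ℝ≥0∞) * (‖fderiv ℝ f x‖₊ : ℝ≥0∞) :=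
    (lintegral_mono hpt).trans
      (le_of_eq (lintegral_const_mul' 2 _ (by norm_num)))
  -- Hölder for the mixed term
  have hMix : ∫⁻ x, (‖f x‖₊ : ℝ≥0∞) * (‖fderiv ℝ f x‖₊ : ℝ≥0∞) ≤
      I ^ ((1:ℝ)/2) * J ^ ((1:ℝ)/2) := by
    have H := ENNReal.lintegral_mul_le_Lp_mul_Lq (volume : Measure E) h22 hfm' hDfm
    simp only [Pi.mul_apply] at H
    have e1 : ∫⁻ x, (‖f x‖₊ : ℝ≥0∞) ^ (2:ℝ) = I := by
      apply lintegral_congr; intro x; rw [rpow_two_eq]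
    have e2 : ∫⁻ x, (‖fderiv ℝ f x‖₊ : ℝ≥0∞) ^ (2:ℝ) = J := by
      apply lintegral_congr; intro x; rw [rpow_two_eq]
    rw [e1, e2] at H
    exact H
  -- combine step 2
  have step2 : ∫⁻ x, (‖f x‖₊ : ℝ≥0∞) ^ (4 : ℕ) ≤ 4 * K * I * J := by
    have e0 : ∫⁻ x, (‖(fun y => f y * f y) x‖₊ : ℝ≥0∞) ^ (2:ℝ) =
        ∫⁻ x, (‖f x‖₊ : ℝ≥0∞) ^ (4 : ℕ) := by
      apply lintegral_congr
      intro x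
      rw [rpow_two_eq]
      simp only [nnnorm_mul, ENNReal.coe_mul]
      ring
    calc ∫⁻ x, (‖f x‖₊ : ℝ≥0∞) ^ (4 : ℕ)
        ≤ (K : ℝ≥0∞) * (∫⁻ x, (‖fderiv ℝ (fun y => f y * f y) x‖₊ : ℝ≥0∞)) ^ (2:ℝ) := by
          rw [← e0]; exact GNS
      _ ≤ (K : ℝ≥0∞) * (2 * (I ^ ((1:ℝ)/2) * J ^ ((1:ℝ)/2))) ^ (2:ℝ) := by
          gcongr
          exact hDer.trans (by gcongr)
      _ = 4 * K * I * J := by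
          rw [ENNReal.mul_rpow_of_nonneg _ _ (by norm_num : (0:ℝ) ≤ 2),
            ENNReal.mul_rpow_of_nonneg _ _ (by norm_num : (0:ℝ) ≤ 2),
            ← ENNReal.rpow_mul I, ← ENNReal.rpow_mul J]
          norm_num
          ring
  -- combine everything
  rcases eq_or_ne I 0 with h0 | h0
  · rw [hI] at h0 ⊢; rw [h0]; exact zero_le
  have sq : I * I ≤ (4 * K * volume A * J) * I := by
    calc I * I ≤ ((volume A) ^ ((1:ℝ)/2) * (∫⁻ x, (‖f x‖₊ : ℝ≥0∞) ^ (4 : ℕ)) ^ ((1:ℝ)/2)) *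
          ((volume A) ^ ((1:ℝ)/2) * (∫⁻ x, (‖f x‖₊ : ℝ≥0∞) ^ (4 : ℕ)) ^ ((1:ℝ)/2)) :=
          mul_le_mul' step1 step1
      _ = volume A * (∫⁻ x, (‖f x‖₊ : ℝ≥0∞) ^ (4 : ℕ)) := by
          rw [mul_mul_mul_comm, ← ENNReal.rpow_add_of_nonneg _ _ (by norm_num) (by norm_num),
            ← ENNReal.rpow_add_of_nonneg _ _ (by norm_num) (by norm_num)]
          norm_num
      _ ≤ volume A * (4 * K * I * J) := by gcongr
      _ = (4 * K * volume A * J) * I := by ring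
  have := (ENNReal.mul_le_mul_iff_left h0 hIfin).mp sq
  simpa [hI, hJ, hA] using this

/-- a Poincaré-type inequality in the plane: there is a universal `C > 0`
such that for all `C¹` compactly supported `f : ℝ² → ℝ`,
`∫ |f|² ≤ C |{f ≠ 0}| ∫ ‖∇f‖²`. -/
theorem stmt_14 :
    ∃ C > (0 : ℝ), ∀ f : EuclideanSpace ℝ (Fin 2) → ℝ,
      ContDiff ℝ 1 f → HasCompactSupport f →
      ∫ x, |f x| ^ 2 ≤
        C * (volume {x | f x ≠ 0}).toReal * ∫ x, ‖gradient f x‖ ^ 2 := by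
  classical
  set K : ℝ≥0 := MeasureTheory.lintegralPowLePowLIntegralFDerivConst (volume : Measure E) 2
  refine ⟨4 * K + 1, by positivity, ?_⟩
  intro f hf hsupp
  have hgradnorm : ∀ x, ‖gradient f x‖ = ‖fderiv ℝ f x‖ := fun x =>
    (InnerProductSpace.toDual ℝ _).symm.norm_map _
  -- integrability
  have hcs1 : HasCompactSupport (fun x => |f x| ^ 2) := by
    have := hsupp.comp_left (g := fun y : ℝ => |y| ^ 2) (by simp)
    simpa [Function.comp_def] using this
  have hint1 : Integrable (fun x => |f x| ^ 2) :=
    (hf.continuous.abs.pow 2).integrable_of_hasCompactSupport hcs1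
  have hDcont : Continuous (fun x => fderiv ℝ f x) := hf.continuous_fderiv one_ne_zero
  have hcs2 : HasCompactSupport (fun x => ‖fderiv ℝ f x‖ ^ 2) := by
    have := (hsupp.fderiv ℝ).comp_left
      (g := fun y : (EuclideanSpace ℝ (Fin 2)) →L[ℝ] ℝ => ‖y‖ ^ 2) (by simp)
    simpa [Function.comp_def] using this
  have hint2 : Integrable (fun x => ‖fderiv ℝ f x‖ ^ 2) :=
    (hDcont.norm.pow 2).integrable_of_hasCompactSupport hcs2
  -- rewrite real integrals as lintegrals
  have eq1 : ∫ x, |f x| ^ 2 = (∫⁻ x, (‖f x‖₊ : ℝ≥0∞) ^ (2:ℕ)).toReal := by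
    rw [integral_eq_lintegral_of_nonneg_ae (Filter.Eventually.of_forall fun x => by positivity)
      hint1.aestronglyMeasurable]
    congr 1
    apply lintegral_congr
    intro x
    rw [ENNReal.ofReal_pow (abs_nonneg _)]
    congr 1
    rw [← Real.norm_eq_abs, ofReal_norm, enorm_eq_nnnorm]
  have eq2 : ∫ x, ‖gradient f x‖ ^ 2 = (∫⁻ x, (‖fderiv ℝ f x‖₊ : ℝ≥0∞) ^ (2:ℕ)).toReal := by
    have hg : (fun x => ‖gradient f x‖ ^ 2) = fun x => ‖fderiv ℝ f x‖ ^ 2 := by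
      funext x; rw [hgradnorm]
    rw [hg, integral_eq_lintegral_of_nonneg_ae
      (Filter.Eventually.of_forall fun x => by positivity) hint2.aestronglyMeasurable]
    congr 1
    apply lintegral_congr
    intro x
    rw [ENNReal.ofReal_pow (norm_nonneg _), ofReal_norm, enorm_eq_nnnorm]
  rw [eq1, eq2]
  -- finiteness
  have hAfin : volume {x | f x ≠ 0} ≠ ∞ := by
    refine ne_of_lt (lt_of_le_of_lt (measure_mono ?_) hsupp.isCompact.measure_lt_top)
    exact fun x hx => subset_tsupport f hx
  have hJfin : (∫⁻ x, (‖fderiv ℝ f x‖₊ : ℝ≥0∞) ^ (2:ℕ)) ≠ ∞ := by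
    have hlt : ∫⁻ x, (‖(‖fderiv ℝ f x‖ ^ 2 : ℝ)‖₊ : ℝ≥0∞) < ∞ := hint2.2
    refine ne_of_lt (lt_of_le_of_lt (le_of_eq (lintegral_congr fun x => ?_)) hlt)
    rw [nnnorm_pow, nnnorm_norm]
    push_cast
    ring
  have key := key_lintegral f hf hsupp
  calc (∫⁻ x, (‖f x‖₊ : ℝ≥0∞) ^ (2:ℕ)).toReal
      ≤ (4 * K * volume {x | f x ≠ 0} * ∫⁻ x, (‖fderiv ℝ f x‖₊ : ℝ≥0∞) ^ (2:ℕ)).toReal := by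
        apply ENNReal.toReal_mono _ key
        refine ENNReal.mul_ne_top (ENNReal.mul_ne_top ?_ hAfin) hJfin
        exact ENNReal.mul_ne_top (by norm_num) ENNReal.coe_ne_top
    _ ≤ (4 * K + 1) * (volume {x | f x ≠ 0}).toReal *
          (∫⁻ x, (‖fderiv ℝ f x‖₊ : ℝ≥0∞) ^ (2:ℕ)).toReal := by
        rw [ENNReal.toReal_mul, ENNReal.toReal_mul, ENNReal.toReal_mul]
        have h1 : (0:ℝ) ≤ (volume {x | f x ≠ 0}).toReal := ENNReal.toReal_nonneg
        have h2 : (0:ℝ) ≤ (∫⁻ x, (‖fderiv ℝ f x‖₊ : ℝ≥0∞) ^ (2:ℕ)).toReal :=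
          ENNReal.toReal_nonneg
        have h4 : ((4:ℝ≥0∞)).toReal = 4 := by norm_num
        have hK : ((K:ℝ≥0∞)).toReal = (K:ℝ) := rfl
        rw [h4, hK]
        nlinarith [NNReal.coe_nonneg K]
end
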